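/- arXiv:0907.3332 — 6 statements merged into one kernel-verified Lean document; each statement's English description precedes it below -/
import Mathlib

section
/- Let F ⊆ G be lattice filters of an MV-algebra L. Then F ⊸ G = {z ∈ L | for every f ∈ F, f ⊗ z ∈ G}. -/
/-- An MV-algebra: a commutative monoid `(L, ⊕, 0)` with a unary `¬` satisfying
`¬¬x = x`, `x ⊕ ¬0 = ¬0` and `¬(¬x ⊕ y) ⊕ y = ¬(¬y ⊕ x) ⊕ x`. -/
class MV (L : Type*) where
  add : L → L → L
  zero : L
  neg : L → L
  add_assoc : ∀ x y z : L, add (add x y) z = add x (add y z)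
  add_comm : ∀ x y : L, add x y = add y x
  add_zero : ∀ x : L, add x zero = x
  neg_neg : ∀ x : L, neg (neg x) = x
  add_neg_zero : ∀ x : L, add x (neg zero) = neg zero
  luk : ∀ x y : L, add (neg (add (neg x) y)) y = add (neg (add (neg y) x)) x

namespace MV

variable {L : Type*} [MV L]

/-- `1 = ¬0`. -/
def one : L := neg zero

/-- `x → y = ¬x ⊕ y`. -/
def imp (x y : L) : L := add (neg x) y

/-- `x ⊗ y = ¬(¬x ⊕ ¬y)`. -/
def otimes (x y : L) : L := neg (add (neg x) (neg y))

/-- `x ∨ y = (x → y) → y`. -/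
def join (x y : L) : L := imp (imp x y) y

/-- `x ∧ y = ¬(¬x ∨ ¬y)`. -/
def meet (x y : L) : L := neg (join (neg x) (neg y))

/-- `x ≤ y` iff `x → y = 1`. -/
def le (x y : L) : Prop := imp x y = one

/-- `x < y` iff `x ≤ y` and `x ≠ y`. -/
def lt (x y : L) : Prop := le x y ∧ x ≠ y

/-- A lattice filter: nonempty, upward closed, closed under `∧`. -/
def IsLatticeFilter (F : Set L) : Prop :=
  F.Nonempty ∧ (∀ x y : L, x ∈ F → le x y → y ∈ F) ∧
    (∀ x y : L, x ∈ F → y ∈ F → meet x y ∈ F)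

/-- A prime lattice filter: a proper lattice filter such that
`x ∨ y ∈ F` implies `x ∈ F` or `y ∈ F`. -/
def IsPrimeFilter (F : Set L) : Prop :=
  IsLatticeFilter F ∧ F ≠ Set.univ ∧ ∀ x y : L, join x y ∈ F → x ∈ F ∨ y ∈ F

/-- `F ⊸ G = {z | ∀ a ∉ G, z → a ∉ F}` (intended for `F ⊆ G`). -/
def lolli (F G : Set L) : Set L := {z | ∀ a ∉ G, imp z a ∉ F}

/-- The general `F ⊸ G = (F ∩ G) ⊸ G`. -/
def lolli' (F G : Set L) : Set L := lolli (F ∩ G) G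

/-- The kernel `K(F) = {z | ∀ a ∉ F, z → a ∉ F}`. -/
def ker (F : Set L) : Set L := {z | ∀ a ∉ F, imp z a ∉ F}

/-- `F⁺ = {z | ¬z ∉ F}`. -/
def plus (F : Set L) : Set L := {z | neg z ∉ F}

/-- An implication filter: contains `1` and is closed under modus ponens. -/
def IsImplicationFilter (P : Set L) : Prop :=
  (one : L) ∈ P ∧ ∀ x y : L, x ∈ P → imp x y ∈ P → y ∈ P

/-- `x ~_P y` iff `x → y ∈ P` and `y → x ∈ P`. -/
def simP (P : Set L) (x y : L) : Prop := imp x y ∈ P ∧ imp y x ∈ P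

/-- `J_u(F, P) = {z | ∃ f ∈ F, z ~_P f}`. -/
def Ju (F P : Set L) : Set L := {z | ∃ f ∈ F, simP P z f}

/-- `J_d(F, P) = (J_u(F⁺, P))⁺`. -/
def Jd (F P : Set L) : Set L := plus (Ju (plus F) P)

end MV

open MV

namespace MVAux

variable {L : Type*} [MV L]

lemma zero_add (x : L) : MV.add MV.zero x = x := by
  rw [MV.add_comm, MV.add_zero]

lemma neg_add_self (x : L) : MV.add (MV.neg x) x = (one : L) := by
  have h := MV.luk (MV.neg (MV.zero : L)) x
  rw [MV.neg_neg, zero_add, MV.add_neg_zero] at h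
  exact h

lemma add_neg_self (x : L) : MV.add x (MV.neg x) = (one : L) := by
  rw [MV.add_comm]; exact neg_add_self x

lemma le_imp_otimes (f z : L) : le f (imp z (otimes f z)) := by
  show imp f (imp z (otimes f z)) = one
  unfold imp otimes
  rw [← MV.add_assoc]
  exact add_neg_self _

lemma otimes_imp_le (z a : L) : le (otimes (imp z a) z) a := by
  show imp (otimes (imp z a) z) a = one
  unfold imp otimes
  rw [MV.neg_neg, MV.add_assoc]
  exact neg_add_self _

end MVAux

open MVAux in
/-- For lattice filters `F ⊆ G`,
`F ⊸ G = {z | ∀ f ∈ F, f ⊗ z ∈ G}`. -/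
theorem stmt_0 {L : Type*} [MV L] (F G : Set L)
    (hF : IsLatticeFilter F) (hG : IsLatticeFilter G) (hFG : F ⊆ G) :
    lolli F G = {z : L | ∀ f ∈ F, otimes f z ∈ G} := by
  ext z
  constructor
  · intro hz f hf
    by_contra ha
    exact hz (otimes f z) ha (hF.2.1 f _ hf (le_imp_otimes f z))
  · intro hz a haG hi
    exact haG (hG.2.1 _ a (hz _ hi) (otimes_imp_le z a))
end

section
/- Let F ⊆ G be lattice filters of an MV-algebra L. Then F ⊸ G = G⁺ ⊸ F⁺, where for a lattice filter H, H⁺ = {z ∈ L | ¬z ∉ H} (note G⁺ ⊆ F⁺ when F ⊆ G). -/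
open MV

section Aux
variable {L : Type*} [MV L]

private lemma neg_add_self' (x : L) : MV.add (MV.neg x) x = MV.one := by
  have h := MV.luk x (MV.one : L)
  have h1 : MV.add (MV.neg x) (MV.one : L) = MV.one := by
    rw [MV.one, MV.add_neg_zero]
  have h2 : MV.neg (MV.one : L) = MV.zero := by rw [MV.one, MV.neg_neg]
  rw [h1, h2] at h
  rw [MV.add_comm MV.zero, MV.add_zero, MV.add_comm MV.zero x, MV.add_zero] at h
  exact h.symm

private lemma add_one' (x : L) : MV.add x (MV.one : L) = MV.one := by
  rw [MV.one, MV.add_neg_zero]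

private lemma leA (z a : L) : MV.le a (MV.imp z (MV.otimes z a)) := by
  unfold MV.le MV.imp MV.otimes
  rw [← MV.add_assoc, MV.add_comm (MV.neg a) (MV.neg z), MV.add_comm,
    neg_add_self']

private lemma leB (z a : L) : MV.le (MV.otimes z (MV.imp z a)) a := by
  unfold MV.le MV.imp MV.otimes
  rw [MV.neg_neg, MV.add_assoc, MV.luk z a, ← MV.add_assoc,
    MV.add_comm (MV.neg z) (MV.neg (MV.add (MV.neg a) z)), MV.add_assoc,
    neg_add_self', add_one']

end Aux

/-- For lattice filters `F ⊆ G`, `F ⊸ G = G⁺ ⊸ F⁺`. -/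
theorem stmt_5 {L : Type*} [MV L] (F G : Set L)
    (hF : IsLatticeFilter F) (hG : IsLatticeFilter G) (hFG : F ⊆ G) :
    lolli F G = lolli (plus G) (plus F) := by
  obtain ⟨-, hFup, -⟩ := hF
  obtain ⟨-, hGup, -⟩ := hG
  ext z
  constructor
  · intro hz a ha hag
    simp only [plus, Set.mem_setOf_eq, not_not] at ha hag
    -- ha : neg a ∈ F, hag : neg (imp z a) ∈ G : contradiction needed
    have hfa : MV.imp z (MV.otimes z (MV.neg a)) ∈ F :=
      hFup _ _ ha (leA z (MV.neg a))
    have hGmem : MV.otimes z (MV.neg a) ∈ G := by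
      by_contra hng
      exact hz _ hng hfa
    have : MV.otimes z (MV.neg a) = MV.neg (MV.imp z a) := by
      unfold MV.otimes MV.imp
      rw [MV.neg_neg]
    rw [this] at hGmem
    exact hag hGmem
  · intro hz a haG hzaF
    -- hz : ∀ b ∉ plus F, imp z b ∉ plus G
    have h1 : MV.neg (MV.imp z a) ∉ plus F := by
      simp only [plus, Set.mem_setOf_eq, not_not, MV.neg_neg]
      exact hzaF
    have h2 := hz _ h1
    simp only [plus, Set.mem_setOf_eq, not_not] at h2
    have heq : MV.neg (MV.imp z (MV.neg (MV.imp z a))) = MV.otimes z (MV.imp z a) := by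
      unfold MV.otimes MV.imp
      rfl
    rw [heq] at h2
    exact haG (hGup _ _ h2 (leB z a))
end

section
/- Let F be a lattice filter of an MV-algebra L. Then K(F) ⊸ F = F. -/
open MV

section Aux
variable {L : Type*} [MV L]

lemma mv_zero_add (x : L) : add zero x = x := by
  rw [MV.add_comm]; exact add_zero x

lemma mv_neg_add_self (x : L) : add (neg x) x = one := by
  have h := luk x (neg zero : L)
  rw [add_neg_zero, MV.neg_neg, mv_zero_add] at h
  exact h.symm

lemma mv_imp_self (x : L) : imp x x = one := mv_neg_add_self x

lemma mv_imp_one (a : L) : imp (one : L) a = a := by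
  simp only [imp, one, MV.neg_neg, mv_zero_add]

lemma mv_add_one (x : L) : add x (one : L) = one := add_neg_zero x

lemma mv_le_join (z a : L) : le z (imp (imp z a) a) := by
  simp only [le, imp]
  rw [luk, ← MV.add_assoc, MV.add_comm (neg z), MV.add_assoc, mv_neg_add_self, mv_add_one]

lemma mv_one_mem_ker (F : Set L) : (one : L) ∈ ker F := by
  intro a ha
  rwa [mv_imp_one]

end Aux

/-- For a lattice filter `F`, `K(F) ⊸ F = F`. -/
theorem stmt_6 {L : Type*} [MV L] (F : Set L) (hF : IsLatticeFilter F) :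
    lolli (ker F) F = F := by
  obtain ⟨-, hup, -⟩ := hF
  ext z
  constructor
  · intro hz
    by_contra hzF
    exact hz z hzF (by rw [mv_imp_self]; exact mv_one_mem_ker F)
  · intro hz a haF hk
    exact hk a haF (hup z (imp (imp z a) a) hz (mv_le_join z a))
end

section
/- Let F, H, G be lattice filters of an MV-algebra L with F ⊆ G and H ⊆ G. Then F ⊆ H ⊸ G if and only if H ⊆ F ⊸ G. -/
open MV

private lemma MV.neg_add_self {L : Type*} [MV L] (x : L) :
    add (neg x) x = (MV.one : L) := by
  have h := MV.luk x (MV.one : L)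
  unfold MV.one at *
  rw [MV.neg_neg] at h
  have h1 : add (neg x) (neg (MV.zero : L)) = neg (MV.zero : L) := by
    exact MV.add_neg_zero (neg x)
  have h2 : add (MV.zero : L) x = x := by
    rw [MV.add_comm]; exact MV.add_zero x
  rw [h1, h2] at h
  have h3 : add (neg (neg (MV.zero : L))) (neg (MV.zero : L)) = neg (MV.zero : L) := by
    rw [MV.neg_neg, MV.add_comm]; exact MV.add_zero _
  rw [h3] at h
  exact h.symm

private lemma MV.le_join_left {L : Type*} [MV L] (x y : L) :
    le x (join x y) := by
  show imp x (join x y) = one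
  unfold MV.join MV.imp
  rw [← MV.add_assoc, MV.add_comm (neg x) (neg (add (neg x) y)),
    MV.add_assoc, MV.neg_add_self]

private lemma stmt7_aux {L : Type*} [MV L] (F H G : Set L)
    (hH : IsLatticeFilter H) (h1 : F ⊆ lolli H G) : H ⊆ lolli F G := by
  intro h hh a haG hfa
  have := h1 hfa a haG
  exact this (hH.2.1 h (join h a) hh (MV.le_join_left h a))

/-- For lattice filters `F, H ⊆ G`,
`F ⊆ H ⊸ G` iff `H ⊆ F ⊸ G`. -/
theorem stmt_7 {L : Type*} [MV L] (F H G : Set L)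
    (hF : IsLatticeFilter F) (hH : IsLatticeFilter H) (hG : IsLatticeFilter G)
    (hFG : F ⊆ G) (hHG : H ⊆ G) :
    F ⊆ lolli H G ↔ H ⊆ lolli F G :=
  ⟨stmt7_aux F H G hH, stmt7_aux H F G hF⟩
end

section
/- Let F and G be lattice filters of an MV-algebra L with F ⊆ G⁺. Then Martinez' function Φ(F, G) = ⋃_{f ∈ F} {y ∈ L | f → y ∈ G} satisfies Φ(F, G) = (F ⊸ G⁺)⁺. -/
namespace MV
variable {L : Type*} [MV L]

lemma neg_add_self' (x : L) : add (neg x) x = one := by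
  have h := luk x (one : L)
  have h1 : add (neg x) (one : L) = one := add_neg_zero (neg x)
  have h2 : (neg one : L) = zero := neg_neg zero
  rw [h1, h2] at h
  rw [add_comm zero x, add_zero, add_comm zero one, add_zero] at h
  exact h.symm

lemma le_join_left_s9 (x y : L) : le x (join x y) := by
  unfold le imp join imp
  rw [luk x y, ← add_assoc, add_comm (neg x) (neg (add (neg y) x)), add_assoc,
    neg_add_self']
  exact add_neg_zero (neg (add (neg y) x))

end MV

open MV
/-- For lattice filters `F ⊆ G⁺`,
`Φ(F, G) = ⋃_{f ∈ F} {y | f → y ∈ G} = (F ⊸ G⁺)⁺`. -/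
theorem stmt_9 {L : Type*} [MV L] (F G : Set L)
    (hF : IsLatticeFilter F) (hG : IsLatticeFilter G) (hFG : F ⊆ plus G) :
    (⋃ f ∈ F, {y : L | imp f y ∈ G}) = plus (lolli F (plus G)) := by
  obtain ⟨-, hFup, -⟩ := hF
  obtain ⟨-, hGup, -⟩ := hG
  ext y
  simp only [Set.mem_iUnion, Set.mem_setOf_eq, plus, lolli]
  constructor
  · rintro ⟨f, hf, hfy⟩
    intro hcon
    have := hcon (neg (imp f y)) (by simp only [Set.mem_setOf_eq, MV.neg_neg]; exact fun h => h hfy)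
    apply this
    have : imp (neg y) (neg (imp f y)) = join f y := by
      unfold imp join imp; rw [MV.neg_neg, MV.add_comm y (neg (add (neg f) y))]
    rw [this]
    exact hFup f _ hf (le_join_left_s9 f y)
  · intro h
    simp only [Set.mem_setOf_eq, not_forall, not_not, exists_prop] at h
    obtain ⟨a, ha, hay⟩ := h
    refine ⟨imp (neg y) a, hay, ?_⟩
    have : imp (imp (neg y) a) y = join (neg a) y := by
      unfold imp join imp; rw [MV.neg_neg, MV.neg_neg, MV.add_comm y a]
    rw [this]
    exact hGup (neg a) _ ha (le_join_left_s9 (neg a) y)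
end

section
/- Let F be a lattice filter and P an implication filter of an MV-algebra L. If H is any lattice filter with F ⊆ H and P ⊆ K(H), then J_u(F, P) ⊆ H; that is, J_u(F, P) is the smallest lattice filter containing F whose kernel contains P. -/
open MV
/-- If `F` is a lattice filter, `P` an implication filter, and
`H` is any lattice filter with `F ⊆ H` and `P ⊆ K(H)`, then `J_u(F, P) ⊆ H`. -/
theorem stmt_10 {L : Type*} [MV L] (F P H : Set L)
    (hF : IsLatticeFilter F) (hP : IsImplicationFilter P)
    (hH : IsLatticeFilter H) (hFH : F ⊆ H) (hPK : P ⊆ ker H) :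
    Ju F P ⊆ H := by
  intro z hz
  obtain ⟨f, hfF, hzf, hfz⟩ := hz
  by_contra hzH
  -- since f→z ∈ P ⊆ ker H and z ∉ H, (f→z)→z ∉ H
  have hnot : imp (imp f z) z ∉ H := hPK hfz z hzH
  -- but f ≤ (f→z)→z, and f ∈ H, so (f→z)→z ∈ H
  have hle : le f (imp (imp f z) z) := by
    have nas : ∀ x : L, add (neg x) x = (one : L) := by
      intro x
      have h := luk x (one : L)
      have h1 : add (neg (add (neg x) (one : L))) (one : L) = (one : L) :=
        add_neg_zero _
      have h2 : neg (one : L) = (zero : L) := neg_neg zero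
      have h3 : add (zero : L) x = x := by rw [MV.add_comm, MV.add_zero]
      rw [h1, h2, h3] at h
      exact h.symm
    show imp f (imp (imp f z) z) = one
    unfold imp
    rw [← MV.add_assoc, MV.add_comm (neg f) (neg (add (neg f) z)), MV.add_assoc]
    exact nas (add (neg f) z)
  exact hnot (hH.2.1 f _ (hFH hfF) hle)
end
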